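/- arXiv:2003.02557 — 2 statements merged into one kernel-verified Lean document; each statement's English description precedes it below -/
import Mathlib

section
/- Let C = [[13,−2],[20,−3]], P_{1/3} = [[1, 1/3],[0,1]], and L₂₀ = [[4, −1/2],[10, −1]]. Then the matrix C⁻¹P_{1/3}L₂₀² = [[−3, 1/2],[−30, 14/3]] lies in SL(2,ℝ) and is an elliptic matrix of infinite order. -/
open Matrix MatrixGroups UpperHalfPlane

/-- The matrix `[[-3,1/2],[-30,14/3]]`. -/
noncomputable def Emat : Matrix (Fin 2) (Fin 2) ℝ := !![-3, 1/2; -30, 14/3]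

lemma Edet : Emat.det = 1 := by simp [Emat, Matrix.det_fin_two_of]; norm_num

/-- `Emat` as an element of `SL(2,ℝ)`. -/
noncomputable def Esl : SL(2, ℝ) := ⟨Emat, Edet⟩

lemma Eapp (i j : Fin 2) : Esl i j = Emat i j := rfl

/-- The fixed point `(23 + √11 i)/180`. -/
noncomputable def z₀ : ℍ := ⟨⟨23/180, Real.sqrt 11 / 180⟩, by
  show (0:ℝ) < Real.sqrt 11 / 180
  positivity⟩

lemma smul_eq_iffE (z : ℍ) : Esl • z = z ↔ 180 * (z:ℂ)^2 - 46 * z + 3 = 0 := by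
  rw [UpperHalfPlane.specialLinearGroup_apply]
  rw [UpperHalfPlane.ext_iff]
  have h00 : Emat 0 0 = -3 := rfl
  have h01 : Emat 0 1 = 1/2 := rfl
  have h10 : Emat 1 0 = -30 := rfl
  have h11 : Emat 1 1 = 14/3 := rfl
  simp only [UpperHalfPlane.coe_mk, Eapp, h00, h01, h10, h11,
    Algebra.algebraMap_self, RingHom.id_apply]
  have hd : ((-30 : ℝ) : ℂ) * z + ((14/3 : ℝ) : ℂ) ≠ 0 := by
    intro h
    have := congrArg Complex.im h
    simp [Complex.add_im, Complex.mul_im] at this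
    exact z.im_ne_zero this
  rw [div_eq_iff hd]
  push_cast
  constructor <;> intro h
  · linear_combination 6 * h
  · linear_combination h/6

lemma z₀_root : 180 * ((z₀ : ℂ))^2 - 46 * (z₀ : ℂ) + 3 = 0 := by
  have h11 : Real.sqrt 11 ^ 2 = 11 := Real.sq_sqrt (by norm_num)
  have h : (z₀ : ℂ) = ⟨23/180, Real.sqrt 11 / 180⟩ := rfl
  rw [h]
  apply Complex.ext <;>
    simp [Complex.ext_iff, pow_two, Complex.mul_re, Complex.mul_im] <;> nlinarith [h11]

lemma unique_root (z : ℍ) (hz : 180 * (z:ℂ)^2 - 46 * z + 3 = 0) : z = z₀ := by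
  have key : ((z:ℂ) - z₀) * (180 * ((z:ℂ) + z₀) - 46) = 0 := by
    linear_combination hz - z₀_root
  rcases mul_eq_zero.1 key with h | h
  · exact UpperHalfPlane.ext (by linear_combination h)
  · exfalso
    have him := congrArg Complex.im h
    have hz0im : (z₀ : ℂ).im = Real.sqrt 11 / 180 := rfl
    simp [Complex.add_im, hz0im] at him
    have h1 : z.im > 0 := z.im_pos
    have hs : Real.sqrt 11 > 0 := Real.sqrt_pos.2 (by norm_num)
    have h3 : z₀.im = Real.sqrt 11 / 180 := rfl
    rw [h3] at him; nlinarith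

/-- Integer sequence controlling the powers of `Emat`. -/
def bseq : ℕ → ℤ
  | 0 => 0
  | 1 => 1
  | (n+2) => 5 * bseq (n+1) - 9 * bseq n

lemma bseq_mod (n : ℕ) : (bseq (n+1) : ZMod 3) = 2 ^ n := by
  induction n with
  | zero => simp [bseq]
  | succ k ih =>
    show (bseq (k+2) : ZMod 3) = 2 ^ (k+1)
    rw [bseq]
    push_cast
    rw [ih]
    have h9 : (9 : ZMod 3) = 0 := rfl
    have h5 : (5 : ZMod 3) = 2 := rfl
    rw [h9, h5]
    ring

lemma bseq_ne_zero (n : ℕ) : bseq (n+1) ≠ 0 := by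
  intro h
  have := bseq_mod n
  rw [h] at this
  have h2 : ((2 : ZMod 3))^n ≠ 0 := pow_ne_zero n (by decide)
  exact h2 (by simpa using this.symm)

lemma Esq : Emat ^ 2 = (5/3 : ℝ) • Emat - 1 := by
  rw [pow_two]
  ext i j
  fin_cases i <;> fin_cases j <;>
    simp [Emat, Matrix.mul_apply, Fin.sum_univ_two, Matrix.one_apply] <;> norm_num

lemma Epow (n : ℕ) : Emat ^ (n+1) =
    ((bseq (n+1) : ℝ)/3^n) • Emat - ((3 * bseq n : ℝ)/3^n) • 1 := by
  induction n with
  | zero => simp [bseq]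
  | succ k ih =>
    have : Emat ^ (k+2) = Emat ^ (k+1) * Emat := by rw [← pow_succ]
    rw [this, ih, sub_mul, Matrix.smul_mul, Matrix.smul_mul, one_mul, ← pow_two, Esq]
    rw [show bseq (k+2) = 5 * bseq (k+1) - 9 * bseq k from rfl]
    push_cast
    rw [smul_sub, smul_smul]
    ext i j
    simp only [Matrix.sub_apply, Matrix.smul_apply, smul_eq_mul]
    ring

lemma Epow_ne_one (n : ℕ) (hn : 0 < n) : Esl ^ n ≠ 1 := by
  obtain ⟨m, rfl⟩ := Nat.exists_eq_add_of_lt hn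
  rw [zero_add]
  intro h
  have hmat : Emat ^ (m+1) = 1 := by
    have := congrArg (fun g : SL(2,ℝ) => (g : Matrix (Fin 2) (Fin 2) ℝ)) h
    simpa only [Matrix.SpecialLinearGroup.coe_pow, Matrix.SpecialLinearGroup.coe_one,
      show (Esl : Matrix (Fin 2) (Fin 2) ℝ) = Emat from rfl] using this
  rw [Epow] at hmat
  have h10 := congrFun (congrFun hmat 1) 0
  have hE10 : Emat 1 0 = -30 := rfl
  simp only [Matrix.sub_apply, Matrix.smul_apply, smul_eq_mul, hE10,
    Matrix.one_apply_ne (by decide : (1 : Fin 2) ≠ 0)] at h10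
  have h3 : (3:ℝ)^m ≠ 0 := by positivity
  have hb : (bseq (m+1) : ℝ) = 0 := by
    field_simp at h10
    linarith
  exact bseq_ne_zero m (by exact_mod_cast hb)

/-- With `C = [[13,-2],[20,-3]]`, `P_{1/3} = [[1,1/3],[0,1]]` and
`L₂₀ = [[4,-1/2],[10,-1]]`, the matrix `C⁻¹ P_{1/3} L₂₀² = [[-3,1/2],[-30,14/3]]`
lies in `SL(2,ℝ)` and is elliptic of infinite order. -/
theorem C_inv_P_L_sq_elliptic_infinite_order :
    (!![13, -2; 20, -3] : Matrix (Fin 2) (Fin 2) ℝ)⁻¹ * !![1, 1/3; 0, 1] *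
        (!![4, -1/2; 10, -1] : Matrix (Fin 2) (Fin 2) ℝ) ^ 2 =
      !![-3, 1/2; -30, 14/3] ∧
    (!![-3, 1/2; -30, 14/3] : Matrix (Fin 2) (Fin 2) ℝ).det = 1 ∧
    ∃ E : SL(2, ℝ), (E : Matrix (Fin 2) (Fin 2) ℝ) = !![-3, 1/2; -30, 14/3] ∧
      (∃! z : ℍ, E • z = z) ∧
      (∀ n : ℕ, 0 < n → E ^ n ≠ 1) := by
  refine ⟨?_, Edet, Esl, rfl, ⟨z₀, ?_, ?_⟩, Epow_ne_one⟩
  · rw [Matrix.inv_def, Matrix.adjugate_fin_two_of, Matrix.det_fin_two_of, pow_two]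
    ext i j
    fin_cases i <;> fin_cases j <;>
      simp [Matrix.mul_apply, Fin.sum_univ_two] <;> norm_num
  · exact (smul_eq_iffE z₀).2 z₀_root
  · intro z hz
    exact unique_root z ((smul_eq_iffE z).1 hz)
end

section
/- The matrix [[1, −2/3],[11/2, −8/3]] has determinant 1 (so lies in SL(2,ℝ)) and is an elliptic matrix of infinite order. -/
open Matrix MatrixGroups UpperHalfPlane

noncomputable def pseq : ℕ → ℝ
  | 0 => 0
  | 1 => 1
  | (n+2) => -(5/3) * pseq (n+1) - pseq n

def qseq : ℕ → ℤ
  | 0 => 0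
  | 1 => 3
  | (n+2) => -5 * qseq (n+1) - 9 * qseq n

lemma q_cast : ∀ n, (qseq n : ℝ) = 3 ^ n * pseq n
  | 0 => by simp [qseq, pseq]
  | 1 => by norm_num [qseq, pseq]
  | (n+2) => by
      have h1 := q_cast n
      have h2 := q_cast (n+1)
      simp only [qseq, pseq]
      push_cast
      rw [h1, h2]
      ring

lemma q_mod (n : ℕ) : ((qseq (n+1) : ZMod 9)) = 3 := by
  induction n with
  | zero => norm_num [qseq]
  | succ n ih =>
      show ((qseq (n+2) : ZMod 9)) = 3
      simp only [qseq]
      push_cast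
      rw [ih]
      have h9 : (9 : ZMod 9) = 0 := by decide
      rw [h9]
      ring_nf
      decide

lemma p_ne (n : ℕ) : pseq (n+1) ≠ 0 := by
  intro h
  have hc := q_cast (n+1)
  rw [h, mul_zero] at hc
  have h0 : qseq (n+1) = 0 := by exact_mod_cast hc
  have := q_mod n
  rw [h0] at this
  exact absurd this (by decide)

noncomputable def Mm : Matrix (Fin 2) (Fin 2) ℝ := !![1, -2/3; 11/2, -8/3]

lemma Mm_det : Mm.det = 1 := by norm_num [Mm, Matrix.det_fin_two_of]

lemma Mm_sq : Mm * Mm = (-(5/3) : ℝ) • Mm - 1 := by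
  ext i j
  fin_cases i <;> fin_cases j <;>
    simp [Mm, Matrix.mul_apply, Fin.sum_univ_two, Matrix.one_apply] <;> norm_num

lemma Mm_pow : ∀ n, Mm ^ (n+1) = pseq (n+1) • Mm - pseq n • (1 : Matrix (Fin 2) (Fin 2) ℝ)
  | 0 => by simp [pseq]
  | (n+1) => by
      have ih := Mm_pow n
      rw [pow_succ, ih, sub_mul, smul_mul_assoc, smul_mul_assoc, one_mul, Mm_sq]
      show _ = pseq (n+2) • Mm - pseq (n+1) • (1 : Matrix (Fin 2) (Fin 2) ℝ)
      simp only [pseq]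
      rw [smul_sub]
      rw [smul_smul]
      module

lemma Mm_pow_entry (n : ℕ) : (Mm ^ (n+1)) 1 0 = pseq (n+1) * (11/2) := by
  rw [Mm_pow]
  simp [Mm, Matrix.one_apply]

noncomputable def sq11 : ℝ := Real.sqrt 11

lemma sq11_pos : 0 < sq11 := Real.sqrt_pos.mpr (by norm_num)

lemma sq11_sq : (sq11 : ℂ)^2 = 11 := by
  have : sq11 ^ 2 = 11 := Real.sq_sqrt (by norm_num)
  exact_mod_cast congrArg (fun x : ℝ => (x : ℂ)) this

noncomputable def vfix : ℂ := (1/3 : ℂ) + (sq11/33 : ℝ) * Complex.I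
noncomputable def vfix' : ℂ := (1/3 : ℂ) - (sq11/33 : ℝ) * Complex.I

lemma vfix_im : vfix.im = sq11/33 := by simp [vfix]
lemma vfix'_im : vfix'.im = -(sq11/33) := by simp [vfix']

lemma factor (w : ℂ) :
    w * ((11/2)*w + (-8/3)) - (w + (-2/3)) = (11/2) * ((w - vfix) * (w - vfix')) := by
  have h := sq11_sq
  simp only [vfix, vfix']
  push_cast
  linear_combination (-(11:ℂ)/(2*1089)) * h + ((sq11:ℂ)^2/198) * Complex.I_sq

lemma denom_ne (z : ℍ) : (11/2 : ℂ) * (z:ℂ) + (-8/3) ≠ 0 := by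
  intro h
  have hz : (z:ℂ) = 16/33 := by linear_combination (2/11 : ℂ) * h
  have : (z:ℂ).im = 0 := by rw [hz]; norm_num
  rw [UpperHalfPlane.coe_im] at this
  exact absurd this (ne_of_gt z.im_pos)

lemma smul_iff0 (E : SL(2,ℝ)) (hE : (E : Matrix (Fin 2) (Fin 2) ℝ) = !![1, -2/3; 11/2, -8/3])
    (z : ℍ) : E • z = z ↔ ((z:ℂ) + (-2/3)) / ((11/2) * (z:ℂ) + (-8/3)) = (z:ℂ) := by
  rw [UpperHalfPlane.specialLinearGroup_apply, UpperHalfPlane.ext_iff]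
  simp only [coe_mk, Algebra.algebraMap_self, RingHom.id_apply, hE]
  norm_num

lemma smul_iff (E : SL(2,ℝ)) (hE : (E : Matrix (Fin 2) (Fin 2) ℝ) = !![1, -2/3; 11/2, -8/3])
    (z : ℍ) : E • z = z ↔ ((z:ℂ) - vfix) * ((z:ℂ) - vfix') = 0 := by
  rw [smul_iff0 E hE z, div_eq_iff (denom_ne z)]
  constructor
  · intro h
    have hf := factor (z:ℂ)
    rw [show ((z:ℂ) * ((11/2)*(z:ℂ) + (-8/3)) - ((z:ℂ) + (-2/3))) = 0 by
      rw [← h]; ring] at hf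
    have h2 : (11/2 : ℂ) * (((z:ℂ) - vfix) * ((z:ℂ) - vfix')) = 0 := hf.symm
    rcases mul_eq_zero.mp h2 with h3 | h3
    · norm_num at h3
    · exact h3
  · intro h
    have hf := factor (z:ℂ)
    rw [h, mul_zero, sub_eq_zero] at hf
    linear_combination -hf

noncomputable def z0 : ℍ := UpperHalfPlane.mk vfix (by
  rw [vfix_im]; exact div_pos sq11_pos (by norm_num))

/-- The matrix `[[1,-2/3],[11/2,-8/3]]` has determinant 1 (so lies in `SL(2,ℝ)`)
and is an elliptic matrix of infinite order. -/
theorem matrix_elliptic_infinite_order :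
    (!![1, -2/3; 11/2, -8/3] : Matrix (Fin 2) (Fin 2) ℝ).det = 1 ∧
    ∃ E : SL(2, ℝ), (E : Matrix (Fin 2) (Fin 2) ℝ) = !![1, -2/3; 11/2, -8/3] ∧
      (∃! z : ℍ, E • z = z) ∧
      (∀ n : ℕ, 0 < n → E ^ n ≠ 1) := by
  have hdet : (!![1, -2/3; 11/2, -8/3] : Matrix (Fin 2) (Fin 2) ℝ).det = 1 := Mm_det
  refine ⟨hdet, ⟨Mm, Mm_det⟩, rfl, ?_⟩
  set E : SL(2,ℝ) := ⟨Mm, Mm_det⟩ with hEdef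
  have hE : (E : Matrix (Fin 2) (Fin 2) ℝ) = !![1, -2/3; 11/2, -8/3] := rfl
  refine ⟨⟨z0, ?_, ?_⟩, ?_⟩
  · show E • z0 = z0
    rw [smul_iff E hE]
    rw [show (z0:ℂ) = vfix from rfl, sub_self, zero_mul]
  · intro z hz
    change E • z = z at hz
    rw [smul_iff E hE] at hz
    rcases mul_eq_zero.mp hz with h | h
    · exact UpperHalfPlane.ext (sub_eq_zero.mp h)
    · exfalso
      have him := congrArg Complex.im (sub_eq_zero.mp h)
      rw [UpperHalfPlane.coe_im, vfix'_im] at him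
      have := z.im_pos
      have := sq11_pos
      linarith
  · intro n hn h
    obtain ⟨m, rfl⟩ : ∃ m, n = m + 1 := ⟨n - 1, (Nat.succ_pred_eq_of_pos hn).symm⟩
    have hM : Mm ^ (m+1) = 1 := by
      have h2 := congrArg (fun A : SL(2,ℝ) => (A : Matrix (Fin 2) (Fin 2) ℝ)) h
      simp only [Matrix.SpecialLinearGroup.coe_pow, Matrix.SpecialLinearGroup.coe_one] at h2
      exact h2
    have h3 := congrFun (congrFun hM 1) 0
    rw [Mm_pow_entry] at h3
    have h10 : (1 : Matrix (Fin 2) (Fin 2) ℝ) 1 0 = 0 := by simp [Matrix.one_apply]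
    rw [h10] at h3
    rcases mul_eq_zero.mp h3 with h1 | h1
    · exact p_ne m h1
    · norm_num at h1
end
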